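/- The function F(b) = φ(b)/Φ(−b) − b is strictly decreasing on the interval (0, ∞): for all 0 < a < b one has F(b) < F(a). -/

import Mathlib

open MeasureTheory Filter Topology

/-- Standard normal density. -/
noncomputable def phi (x : ℝ) : ℝ := Real.exp (-x ^ 2 / 2) / Real.sqrt (2 * Real.pi)

/-- Standard normal cumulative distribution function. -/
noncomputable def Phi (x : ℝ) : ℝ := ∫ t in Set.Iio x, phi t

/-- Mills-type ratio. -/
noncomputable def r (b : ℝ) : ℝ := phi b / Phi (-b)

/-- The deficit transformation `F`. -/
noncomputable def F (b : ℝ) : ℝ := phi b / Phi (-b) - b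

open Set

lemma sqrt2pi_pos : 0 < Real.sqrt (2 * Real.pi) :=
  Real.sqrt_pos.2 (by positivity)

lemma phi_pos (x : ℝ) : 0 < phi x := by
  unfold phi; positivity

lemma phi_neg (x : ℝ) : phi (-x) = phi x := by
  simp [phi]

lemma continuous_phi : Continuous phi := by
  unfold phi; fun_prop

lemma phi_eq (x : ℝ) : phi x = x * 0 + Real.exp (-(1/2 : ℝ) * x ^ 2) / Real.sqrt (2 * Real.pi) := by
  simp [phi]; ring_nf

lemma integrable_phi : Integrable phi := by
  have h := (integrable_exp_neg_mul_sq (show (0:ℝ) < 1/2 by norm_num)).div_const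
    (Real.sqrt (2 * Real.pi))
  refine h.congr ?_
  refine Eventually.of_forall fun x => ?_
  simp only [phi]
  ring_nf

lemma integrable_mul_phi : Integrable (fun t : ℝ => -t * phi t) := by
  have h := ((integrable_mul_exp_neg_mul_sq (show (0:ℝ) < 1/2 by norm_num)).div_const
    (Real.sqrt (2 * Real.pi))).neg
  refine h.congr ?_
  refine Eventually.of_forall fun x => ?_
  simp only [phi, Pi.neg_apply]
  ring_nf

lemma hasDerivAt_phi (x : ℝ) : HasDerivAt phi (-x * phi x) x := by
  have h1 : HasDerivAt (fun x : ℝ => -x ^ 2 / 2) (-(2 * x ^ 1) / 2) x :=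
    (hasDerivAt_pow 2 x).neg.div_const 2
  have h2 := (h1.exp).div_const (Real.sqrt (2 * Real.pi))
  refine h2.congr_deriv ?_
  simp only [phi]
  ring

lemma tendsto_phi_atTop : Tendsto phi atTop (𝓝 0) := by
  have h1 : Tendsto (fun x : ℝ => -x ^ 2 / 2) atTop atBot := by
    apply Tendsto.atBot_div_const (by norm_num)
    exact tendsto_neg_atBot_iff.2 (tendsto_pow_atTop (by norm_num : 2 ≠ 0))
  have h2 : Tendsto (fun x : ℝ => Real.exp (-x ^ 2 / 2) / Real.sqrt (2 * Real.pi)) atTop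
      (𝓝 (0 / Real.sqrt (2 * Real.pi))) := (Real.tendsto_exp_atBot.comp h1).div_const _
  rw [zero_div] at h2
  exact h2

lemma tendsto_phi_atBot : Tendsto phi atBot (𝓝 0) := by
  have := tendsto_phi_atTop.comp tendsto_neg_atBot_atTop
  have heq : (phi ∘ fun x : ℝ => -x) = phi := funext fun x => phi_neg x
  rwa [heq] at this

lemma Phi_eq_Iic (x : ℝ) : Phi x = ∫ t in Iic x, phi t := by
  exact setIntegral_congr_set Iio_ae_eq_Iic

lemma Phi_pos (x : ℝ) : 0 < Phi x := by
  rw [Phi]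
  rw [setIntegral_pos_iff_support_of_nonneg_ae
    (Eventually.of_forall fun t => (phi_pos t).le) integrable_phi.integrableOn]
  have : Function.support phi = univ := by
    ext t; simp [Function.mem_support, (phi_pos t).ne']
  rw [this, univ_inter]
  simp [Real.volume_Iio]

lemma integral_neg_mul_phi (c : ℝ) : ∫ t in Iic c, -t * phi t = phi c := by
  have := integral_Iic_of_hasDerivAt_of_tendsto' (a := c) (f := phi)
    (f' := fun t => -t * phi t) (fun x _ => hasDerivAt_phi x)
    integrable_mul_phi.integrableOn tendsto_phi_atBot
  simpa using this

lemma Phi_neg_le (x : ℝ) (hx : 0 < x) : Phi (-x) ≤ phi x / x := by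
  rw [le_div_iff₀ hx, mul_comm, Phi_eq_Iic]
  have key : x * ∫ t in Iic (-x), phi t ≤ ∫ t in Iic (-x), -t * phi t := by
    rw [← integral_const_mul]
    refine setIntegral_mono_on (integrable_phi.integrableOn.const_mul x)
      integrable_mul_phi.integrableOn measurableSet_Iic fun t ht => ?_
    have : x ≤ -t := by simpa using neg_le_neg ht.out
    exact mul_le_mul_of_nonneg_right this (phi_pos t).le
  calc x * ∫ t in Iic (-x), phi t ≤ ∫ t in Iic (-x), -t * phi t := key
    _ = phi (-x) := integral_neg_mul_phi (-x)
    _ = phi x := phi_neg x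

lemma tendsto_Phi_neg : Tendsto (fun x => Phi (-x)) atTop (𝓝 0) := by
  apply squeeze_zero' (Eventually.of_forall fun x => (Phi_pos (-x)).le)
  · filter_upwards [eventually_ge_atTop (1:ℝ)] with x hx
    calc Phi (-x) ≤ phi x / x := Phi_neg_le x (by linarith)
      _ ≤ phi x / 1 := by
          apply div_le_div_of_nonneg_left (phi_pos x).le (by norm_num) hx
      _ = phi x := div_one _
  · exact tendsto_phi_atTop

/-- The upper Mills bound `(x + √(x²+4))/2`. -/
noncomputable def lam (x : ℝ) : ℝ := (x + Real.sqrt (x ^ 2 + 4)) / 2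

lemma sqrt_lt (x : ℝ) : |x| < Real.sqrt (x ^ 2 + 4) := by
  have : |x| = Real.sqrt (x ^ 2) := by rw [Real.sqrt_sq_eq_abs]
  rw [this]
  exact Real.sqrt_lt_sqrt (by positivity) (by linarith)

lemma lam_pos (x : ℝ) : 0 < lam x := by
  have h := sqrt_lt x
  have := neg_abs_le x
  unfold lam; linarith

lemma lam_gt (x : ℝ) : x < lam x := by
  have h := sqrt_lt x
  have := le_abs_self x
  unfold lam; linarith

lemma lam_sq (x : ℝ) : lam x ^ 2 = x * lam x + 1 := by
  have h : Real.sqrt (x ^ 2 + 4) ^ 2 = x ^ 2 + 4 := Real.sq_sqrt (by positivity)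
  unfold lam
  nlinarith [h]

lemma hasDerivAt_lam (x : ℝ) :
    HasDerivAt lam ((1 + x / Real.sqrt (x ^ 2 + 4)) / 2) x := by
  have hpos : 0 < x ^ 2 + 4 := by positivity
  have h1 : HasDerivAt (fun x : ℝ => x ^ 2 + 4) (2 * x) x := by
    simpa using (hasDerivAt_pow 2 x).add_const 4
  have h2 := (Real.hasDerivAt_sqrt hpos.ne').comp x h1
  have h3 := ((hasDerivAt_id x).add h2).div_const 2
  refine h3.congr_deriv ?_
  have hs : Real.sqrt (x ^ 2 + 4) ≠ 0 := (Real.sqrt_pos.2 hpos).ne'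
  field_simp

lemma lam_deriv_lt_one (x : ℝ) : (1 + x / Real.sqrt (x ^ 2 + 4)) / 2 < 1 := by
  have h := sqrt_lt x
  have hs : 0 < Real.sqrt (x ^ 2 + 4) := lt_of_le_of_lt (abs_nonneg x) h
  have : x / Real.sqrt (x ^ 2 + 4) < 1 := by
    rw [div_lt_one hs]
    exact lt_of_le_of_lt (le_abs_self x) h
  linarith

/-- The auxiliary function for the Birnbaum bound. -/
noncomputable def gB (x : ℝ) : ℝ := Phi (-x) - phi x / lam x

lemma hasDerivAt_Phi (x : ℝ) : HasDerivAt Phi (phi x) x := by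
  have claim : ∀ u : ℝ, Phi u = Phi 0 + ∫ t in (0:ℝ)..u, phi t := by
    intro u
    rw [Phi_eq_Iic, Phi_eq_Iic,
      ← intervalIntegral.integral_Iic_sub_Iic integrable_phi.integrableOn
        integrable_phi.integrableOn]
    ring
  have h : HasDerivAt (fun u => Phi 0 + ∫ t in (0:ℝ)..u, phi t) (phi x) x := by
    apply HasDerivAt.const_add
    exact intervalIntegral.integral_hasDerivAt_right
      integrable_phi.intervalIntegrable
      (continuous_phi.stronglyMeasurableAtFilter _ _)
      continuous_phi.continuousAt
  exact h.congr_of_eventuallyEq (Eventually.of_forall claim)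

lemma hasDerivAt_gB (x : ℝ) :
    HasDerivAt gB (phi x * ((1 + x / Real.sqrt (x ^ 2 + 4)) / 2 - 1) / lam x ^ 2) x := by
  have h1 : HasDerivAt (fun x => Phi (-x)) (-phi x) x := by
    have := (hasDerivAt_Phi (-x)).comp x ((hasDerivAt_id x).neg)
    simpa [phi_neg, Function.comp_def] using this
  have h2 : HasDerivAt (fun x => phi x / lam x)
      ((-x * phi x * lam x - phi x * ((1 + x / Real.sqrt (x ^ 2 + 4)) / 2)) / lam x ^ 2) x :=
    (hasDerivAt_phi x).div (hasDerivAt_lam x) (lam_pos x).ne'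
  have h3 := h1.sub h2
  refine h3.congr_deriv ?_
  have hl : lam x ≠ 0 := (lam_pos x).ne'
  have hsq := lam_sq x
  set d := (1 + x / Real.sqrt (x ^ 2 + 4)) / 2 with hd
  field_simp
  nlinarith [hsq, phi_pos x]

lemma gB_strictAnti : StrictAnti gB := by
  apply strictAnti_of_deriv_neg
  intro x
  rw [(hasDerivAt_gB x).deriv]
  have h1 := lam_deriv_lt_one x
  have h2 := phi_pos x
  have h3 := lam_pos x
  apply div_neg_of_neg_of_pos
  · apply mul_neg_of_pos_of_neg h2; linarith
  · positivity

lemma tendsto_gB : Tendsto gB atTop (𝓝 0) := by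
  have h2 : Tendsto (fun x => phi x / lam x) atTop (𝓝 0) := by
    apply squeeze_zero' (Eventually.of_forall fun x => div_nonneg (phi_pos x).le (lam_pos x).le)
    · filter_upwards [eventually_ge_atTop (0:ℝ)] with x hx
      apply div_le_self (phi_pos x).le
      have : Real.sqrt (x ^ 2 + 4) ≥ 2 := by
        rw [show (2:ℝ) = Real.sqrt 4 by rw [show (4:ℝ) = 2^2 by norm_num, Real.sqrt_sq (by norm_num)]]
        exact Real.sqrt_le_sqrt (by nlinarith [sq_nonneg x])
      unfold lam; linarith
    · exact tendsto_phi_atTop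
  have h3 : Tendsto gB atTop (𝓝 (0 - 0)) := tendsto_Phi_neg.sub h2
  simpa using h3

lemma gB_pos (x : ℝ) : 0 < gB x := by
  have h1 : gB (x + 1) < gB x := gB_strictAnti (by linarith)
  have h2 : 0 ≤ gB (x + 1) := by
    apply le_of_tendsto tendsto_gB
    filter_upwards [eventually_ge_atTop (x + 1)] with y hy
    exact gB_strictAnti.antitone hy
  linarith

lemma r_lt_lam (b : ℝ) : phi b / Phi (-b) < lam b := by
  have hg := gB_pos b
  have hP := Phi_pos (-b)
  have hl := lam_pos b
  rw [div_lt_iff₀ hP]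
  have : phi b / lam b < Phi (-b) := by unfold gB at hg; linarith
  rw [div_lt_iff₀ hl] at this
  linarith [this]

lemma hasDerivAt_F (x : ℝ) :
    HasDerivAt F ((phi x / Phi (-x)) ^ 2 - x * (phi x / Phi (-x)) - 1) x := by
  have hP := Phi_pos (-x)
  have h1 : HasDerivAt (fun x => Phi (-x)) (-phi x) x := by
    have := (hasDerivAt_Phi (-x)).comp x ((hasDerivAt_id x).neg)
    simpa [phi_neg, Function.comp_def] using this
  have h2 : HasDerivAt (fun x => phi x / Phi (-x))
      ((-x * phi x * Phi (-x) - phi x * (-phi x)) / Phi (-x) ^ 2) x :=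
    (hasDerivAt_phi x).div h1 hP.ne'
  have h3 := h2.sub (hasDerivAt_id x)
  refine h3.congr_deriv ?_
  field_simp
  ring

lemma deriv_F_neg {x : ℝ} (hx : 0 < x) : deriv F x < 0 := by
  rw [(hasDerivAt_F x).deriv]
  have h1 := r_lt_lam x
  have h2 : 0 < phi x / Phi (-x) := div_pos (phi_pos x) (Phi_pos (-x))
  have h3 := lam_gt x
  have h4 := lam_sq x
  nlinarith

/-- `F` is strictly decreasing on `(0, ∞)`: for `0 < a < b`, `F(b) < F(a)`. -/
theorem F_strictAnti (a b : ℝ) (ha : 0 < a) (hab : a < b) : F b < F a := by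
  have h : StrictAntiOn F (Ici a) := by
    apply strictAntiOn_of_deriv_neg (convex_Ici a)
    · exact fun x _ => (hasDerivAt_F x).differentiableAt.continuousAt.continuousWithinAt
    · intro x hx
      rw [interior_Ici] at hx
      exact deriv_F_neg (lt_trans ha hx)
  exact h (le_refl a) hab.le hab
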